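/- Let r ≥ 3 be fixed. If x is the integer with C(x,r) ≤ ⌊C(m,r)/2⌋ < C(x+1,r), then x + 1 > m/(2^{1/r}·e), and consequently for all sufficiently large m one has C(x−1, r−1) > 2m + 2. -/

import Mathlib

open Finset

lemma pow_le_pow_mul_choose {r m : ℕ} (h : r ≤ m) : m ^ r ≤ r ^ r * m.choose r := by
  have key : m ^ r * r.factorial ≤ (r ^ r * m.choose r) * r.factorial := by
    have h1 : m ^ r * r.factorial = ∏ i ∈ range r, (m * (r - i)) := by
      rw [← Nat.descFactorial_self r, Nat.descFactorial_eq_prod_range, Finset.prod_mul_distrib,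
        Finset.prod_const, Finset.card_range]
    have h2 : r ^ r * m.descFactorial r = ∏ i ∈ range r, (r * (m - i)) := by
      rw [Nat.descFactorial_eq_prod_range, Finset.prod_mul_distrib, Finset.prod_const,
        Finset.card_range]
    calc m ^ r * r.factorial = ∏ i ∈ range r, (m * (r - i)) := h1
      _ ≤ ∏ i ∈ range r, (r * (m - i)) := by
          refine Finset.prod_le_prod' fun i _ => ?_
          rw [Nat.mul_sub, Nat.mul_sub, Nat.mul_comm r m]
          exact Nat.sub_le_sub_left (Nat.mul_le_mul_right i h) _
      _ = r ^ r * m.descFactorial r := h2.symm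
      _ = (r ^ r * m.choose r) * r.factorial := by
          rw [Nat.descFactorial_eq_factorial_mul_choose]; ring
  exact Nat.le_of_mul_le_mul_right key r.factorial_pos

lemma part1_aux (r : ℕ) (hr : 3 ≤ r) (m x : ℕ) (hrm : r ≤ m)
    (h2 : m.choose r / 2 < (x + 1).choose r) :
    (m : ℝ) / (2 ^ ((1 : ℝ) / r) * Real.exp 1) < (x : ℝ) + 1 := by
  have haux : m ^ r ≤ r ^ r * m.choose r := pow_le_pow_mul_choose hrm
  have hr0 : (0:ℝ) < r := by positivity
  set A : ℝ := 2 ^ ((1 : ℝ) / r) with hA_def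
  have hA : 0 < A := Real.rpow_pos_of_pos two_pos _
  have hE : 0 < Real.exp 1 := Real.exp_pos 1
  rw [div_lt_iff₀ (by positivity)]
  by_contra hcon
  push_neg at hcon
  have hA2 : A ^ r = 2 := by
    rw [hA_def, ← Real.rpow_natCast (2 ^ ((1:ℝ)/r)) r, ← Real.rpow_mul (by norm_num : (0:ℝ) ≤ 2),
      one_div_mul_cancel (ne_of_gt hr0), Real.rpow_one]
  have hNat : m.choose r < (x + 1).choose r * 2 := (Nat.div_lt_iff_lt_mul two_pos).mp h2
  have c1 : ((m:ℝ))^r ≤ (r:ℝ)^r * (m.choose r : ℝ) := by exact_mod_cast haux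
  have c2 : (m.choose r : ℝ) < 2 * ((x+1).choose r : ℝ) := by
    have : (m.choose r : ℝ) < ((x+1).choose r : ℝ) * 2 := by exact_mod_cast hNat
    linarith
  have c3 : ((x+1).choose r : ℝ) ≤ ((x:ℝ)+1)^r / r.factorial := by
    have := Nat.choose_le_pow_div (α := ℝ) r (x+1)
    push_cast at this
    convert this using 2
  have c4 : (r:ℝ)^r / r.factorial ≤ Real.exp 1 ^ r := by
    rw [Real.exp_one_pow]
    exact Real.pow_div_factorial_le_exp _ (Nat.cast_nonneg r) r
  have hf : (0:ℝ) < (r.factorial : ℝ) := by exact_mod_cast r.factorial_pos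
  have hrr : (0:ℝ) < (r:ℝ)^r := by positivity
  have H1 : (m:ℝ)^r < 2 * ((x:ℝ)+1)^r * Real.exp 1 ^ r := by
    calc (m:ℝ)^r ≤ (r:ℝ)^r * (m.choose r : ℝ) := c1
      _ < (r:ℝ)^r * (2 * ((x+1).choose r : ℝ)) := by
          exact mul_lt_mul_of_pos_left c2 hrr
      _ ≤ (r:ℝ)^r * (2 * (((x:ℝ)+1)^r / r.factorial)) := by gcongr
      _ = 2 * ((x:ℝ)+1)^r * ((r:ℝ)^r / r.factorial) := by field_simp
      _ ≤ 2 * ((x:ℝ)+1)^r * Real.exp 1 ^ r := by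
          have hx1 : (0:ℝ) ≤ 2 * ((x:ℝ)+1)^r := by positivity
          exact mul_le_mul_of_nonneg_left c4 hx1
  have H2 : 2 * ((x:ℝ)+1)^r * Real.exp 1 ^ r = (((x:ℝ)+1) * (A * Real.exp 1))^r := by
    rw [mul_pow, mul_pow, hA2]; ring
  have H3 : (((x:ℝ)+1) * (A * Real.exp 1))^r ≤ (m:ℝ)^r :=
    pow_le_pow_left₀ (by positivity) hcon r
  linarith

lemma part2_aux (r : ℕ) (hr : 3 ≤ r) (m x : ℕ)
    (hm : 144 * (r-1).factorial + 72 * r ≤ m)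
    (h1 : (m : ℝ) / (2 ^ ((1 : ℝ) / r) * Real.exp 1) < (x : ℝ) + 1) :
    2 * m + 2 < (x - 1).choose (r - 1) := by
  set F := (r-1).factorial with hF_def
  have hF : 1 ≤ F := (r-1).factorial_pos
  have hr0 : (0:ℝ) < r := by positivity
  have hA : (2:ℝ) ^ ((1:ℝ)/r) ≤ 2 := by
    calc (2:ℝ) ^ ((1:ℝ)/r) ≤ 2 ^ (1:ℝ) :=
          Real.rpow_le_rpow_of_exponent_le one_le_two (by
            rw [div_le_one hr0]; exact_mod_cast le_trans (by norm_num) hr)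
      _ = 2 := Real.rpow_one 2
  have hE : Real.exp 1 < 3 := lt_trans Real.exp_one_lt_d9 (by norm_num)
  have hAE : (0:ℝ) < 2 ^ ((1:ℝ)/r) * Real.exp 1 := by positivity
  have hx6R : (m:ℝ) < 6 * x + 6 := by
    have h2 : (m:ℝ) < ((x:ℝ)+1) * (2 ^ ((1:ℝ)/r) * Real.exp 1) := by
      rw [div_lt_iff₀ hAE] at h1; linarith
    have hApos : (0:ℝ) < (2:ℝ) ^ ((1:ℝ)/r) := Real.rpow_pos_of_pos two_pos _
    have h3 : (2:ℝ) ^ ((1:ℝ)/r) * Real.exp 1 ≤ 6 := by nlinarith [Real.exp_pos 1]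
    have hx0 : (0:ℝ) ≤ (x:ℝ) := Nat.cast_nonneg x
    nlinarith
  have hx6 : m < 6 * x + 6 := by exact_mod_cast hx6R
  have hxr : r ≤ x := by omega
  set b := (x - 1) + 1 - (r - 1) with hb_def
  have hb : b = x - r + 1 := by omega
  have hd : b ^ (r-1) ≤ (x-1).descFactorial (r-1) := Nat.pow_sub_le_descFactorial (x-1) (r-1)
  have hdc : (x-1).descFactorial (r-1) = F * (x-1).choose (r-1) :=
    Nat.descFactorial_eq_factorial_mul_choose _ _
  have hb1 : 1 ≤ b := by omega
  have hb2 : b ^ 2 ≤ b ^ (r-1) := Nat.pow_le_pow_right hb1 (by omega)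
  have hkey : F * (2 * m + 3) ≤ b ^ 2 := by
    have h6b : m + 1 ≤ 6 * b + 6 * r := by omega
    nlinarith [sq_nonneg (6*b + 6*r - m - 1), Nat.mul_le_mul hF hm]
  have hmain : F * (2 * m + 3) ≤ F * (x-1).choose (r-1) := by
    calc F * (2*m+3) ≤ b ^ 2 := hkey
      _ ≤ b ^ (r-1) := hb2
      _ ≤ (x-1).descFactorial (r-1) := hd
      _ = F * (x-1).choose (r-1) := hdc
  have := Nat.le_of_mul_le_mul_left hmain hF
  omega

/-- If `C(x,r) ≤ ⌊C(m,r)/2⌋ < C(x+1,r)` with `r ≥ 3`, then `x+1 > m/(2^{1/r}·e)`, and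
consequently for all sufficiently large `m` one has `C(x-1,r-1) > 2m+2`. -/
theorem bounds_on_half_binomial_root (r : ℕ) (hr : 3 ≤ r) :
    (∀ m x : ℕ, r ≤ m → x.choose r ≤ m.choose r / 2 → m.choose r / 2 < (x + 1).choose r →
      (m : ℝ) / (2 ^ ((1 : ℝ) / r) * Real.exp 1) < (x : ℝ) + 1) ∧
    ∃ m₀ : ℕ, ∀ m x : ℕ, m₀ ≤ m →
      x.choose r ≤ m.choose r / 2 → m.choose r / 2 < (x + 1).choose r →
      2 * m + 2 < (x - 1).choose (r - 1) := by
  constructor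
  · exact fun m x hrm _ h2 => part1_aux r hr m x hrm h2
  · refine ⟨144 * (r-1).factorial + 72 * r, fun m x hm _ h2 => ?_⟩
    have hrm : r ≤ m := by
      have := (r-1).factorial_pos
      omega
    exact part2_aux r hr m x hm (part1_aux r hr m x hrm h2)
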